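/- arXiv:1602.06614 — 3 statements merged into one kernel-verified Lean document; each statement's English description precedes it below -/
import Mathlib

section
/- Let A be a commutative group and β : A × A → M a bimultiplicative map into a commutative group M with β(x,y)β(y,x) = 1 for all x,y. Fix integers r ≥ 1 and c, and define σ on T = A^r by σ(t,t') = ∏_{1≤i<j≤r} β(t_i, t'_j) · ∏_{1≤i,j≤r} β(t_i, t'_j)^c. Then for every t ∈ T and a ∈ A, writing aI = (a,…,a), we have σ(t, aI)·σ(aI, t)^{-1} = β(t₁t₂⋯t_r, a)^{r-1+2cr}. -/
open Finset

/-- Torus case of Takeda's Lemma 3.13: for the Kazhdan–Patterson torus cocycle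
`σ(t,t') = ∏_{i<j} β(tᵢ,t'ⱼ) · ∏_{i,j} β(tᵢ,t'ⱼ)^c` built from an antisymmetric
bimultiplicative pairing `β`, one has `σ(t, aI)·σ(aI, t)⁻¹ = β(t₁⋯t_r, a)^{r-1+2cr}`. -/
theorem stmt4 {A M : Type*} [CommGroup A] [CommGroup M] (β : A → A → M)
    (h1 : ∀ x y z : A, β (x * y) z = β x z * β y z)
    (h2 : ∀ x y z : A, β x (y * z) = β x y * β x z)
    (hanti : ∀ x y : A, β x y * β y x = 1)
    (r : ℕ) (hr : 1 ≤ r) (c : ℤ)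
    (σ : (Fin r → A) → (Fin r → A) → M)
    (hσ : ∀ t t' : Fin r → A, σ t t' =
      (∏ i : Fin r, ∏ j ∈ univ.filter (fun j => i < j), β (t i) (t' j)) *
        (∏ i : Fin r, ∏ j : Fin r, β (t i) (t' j)) ^ c)
    (t : Fin r → A) (a : A) :
    σ t (fun _ => a) * (σ (fun _ => a) t)⁻¹ =
      β (∏ i : Fin r, t i) a ^ ((r : ℤ) - 1 + 2 * c * r) := by
  set f : Fin r → M := fun k => β (t k) a with hf
  have hinv : ∀ x, β a x = (β x a)⁻¹ := fun x => eq_inv_of_mul_eq_one_left (hanti a x)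
  have hprod : β (∏ i : Fin r, t i) a = ∏ i : Fin r, f i := by
    exact map_prod (MonoidHom.mk' (fun x => β x a) (fun x y => h1 x y a)) t univ
  have hcard : ∀ k : Fin r,
      ((univ.filter (fun j => k < j)).card : ℤ) +
        ((univ.filter (fun i => i < k)).card : ℤ) = (r : ℤ) - 1 := by
    intro k
    have hdisj : Disjoint (univ.filter (fun j : Fin r => k < j))
        (univ.filter (fun i : Fin r => i < k)) := by
      simp only [Finset.disjoint_filter]
      exact fun x _ hkx hxk => absurd hxk (not_lt.2 hkx.le)
    have hun : (univ.filter (fun j : Fin r => k < j)) ∪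
        (univ.filter (fun i : Fin r => i < k)) = univ.erase k := by
      ext x
      simp [mem_erase, lt_or_lt_iff_ne, ne_comm]
    have hn : (univ.filter (fun j : Fin r => k < j)).card +
        (univ.filter (fun i : Fin r => i < k)).card = r - 1 := by
      rw [← card_union_of_disjoint hdisj, hun, card_erase_of_mem (mem_univ k),
        card_univ, Fintype.card_fin]
    omega
  have L1 : σ t (fun _ => a) =
      ∏ k : Fin r, f k ^ (((univ.filter (fun j => k < j)).card : ℤ) + c * r) := by
    rw [hσ]
    simp only [prod_const, card_univ, Fintype.card_fin, ← hf]
    rw [← Finset.prod_zpow, ← Finset.prod_mul_distrib]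
    refine Finset.prod_congr rfl fun k _ => ?_
    rw [zpow_add, zpow_natCast]
    congr 1
    rw [mul_comm c (r : ℤ), zpow_mul, zpow_natCast]
  have L2 : σ (fun _ => a) t =
      (∏ k : Fin r, f k ^ (((univ.filter (fun i => i < k)).card : ℤ) + c * r))⁻¹ := by
    rw [hσ]
    have hsw : (∏ i : Fin r, ∏ j ∈ univ.filter (fun j => i < j), β a (t j)) =
        ∏ j : Fin r, ∏ i ∈ univ.filter (fun i => i < j), β a (t j) := by
      refine Finset.prod_comm' ?_
      intro x y; simp
    rw [hsw]
    simp only [prod_const, hinv, ← hf, card_univ, Fintype.card_fin]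
    rw [← Finset.prod_pow, ← Finset.prod_zpow, ← Finset.prod_mul_distrib,
      ← Finset.prod_inv_distrib]
    refine Finset.prod_congr rfl fun k _ => ?_
    rw [zpow_add, mul_inv, zpow_natCast, inv_pow]
    congr 1
    rw [mul_comm c (r : ℤ), zpow_mul, zpow_natCast, inv_pow, inv_zpow]
  rw [L1, L2, inv_inv, ← Finset.prod_mul_distrib, hprod, ← Finset.prod_zpow]
  refine Finset.prod_congr rfl fun k _ => ?_
  rw [← zpow_add]
  congr 1
  have := hcard k
  linarith
end

section
/- Let A be a commutative group, n ≥ 1, and β : A × A → μ a bimultiplicative map into a cyclic group μ of order n with β(x,y)β(y,x) = 1 for all x,y. Fix r ≥ 1 and an integer c, and let σ on T = A^r be σ(t,t') = ∏_{i<j} β(t_i,t'_j)·∏_{i,j} β(t_i,t'_j)^c. Form the group T̃ = T × μ with multiplication (t,ζ)(t',ζ') = (tt', ζζ'σ(t,t')). Assume β is nondegenerate modulo n-th powers, i.e., for x ∈ A, β(x,y) = 1 for all y ∈ A if and only if x ∈ Aⁿ. Then (t,ζ) lies in the center of T̃ if and only if there exists z ∈ A with z^{2rc+r-1} ∈ Aⁿ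 and t_i ∈ z·Aⁿ for every i = 1,…,r. -/
open Finset

lemma stmt5_aux2 {A : Type*} [CommGroup A] (v : A) (m : ℤ) (n : ℕ) :
    (v ^ n) ^ m = (v ^ m) ^ n := by
  rw [← zpow_natCast v n, ← zpow_mul, mul_comm, zpow_mul, zpow_natCast]

lemma stmt5_aux {A : Type*} [CommGroup A] (z v : A) (m : ℤ) (r n : ℕ) :
    (z ^ (r : ℤ) * v ^ n) ^ m = z ^ ((r : ℤ) * m) * (v ^ m) ^ n := by
  rw [mul_zpow, ← zpow_mul, stmt5_aux2]

/-- Kazhdan–Patterson description of the center of the metaplectic torus cover: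
with `T̃ = A^r × μ` and multiplication `(t,ζ)(t',ζ') = (tt', ζζ'σ(t,t'))`, and `β`
nondegenerate modulo `n`-th powers, the element `(t,ζ)` is central if and only if
there is `z ∈ A` with `z^{2rc+r-1} ∈ Aⁿ` and `tᵢ ∈ z·Aⁿ` for all `i`. -/
theorem stmt5 {A μ : Type*} [CommGroup A] [CommGroup μ] [Fintype μ]
    (n : ℕ) (hn : 1 ≤ n) (hcard : Fintype.card μ = n) (hcyc : IsCyclic μ)
    (β : A → A → μ)
    (h1 : ∀ x y z : A, β (x * y) z = β x z * β y z)
    (h2 : ∀ x y z : A, β x (y * z) = β x y * β x z)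
    (hanti : ∀ x y : A, β x y * β y x = 1)
    (r : ℕ) (hr : 1 ≤ r) (c : ℤ)
    (σ : (Fin r → A) → (Fin r → A) → μ)
    (hσ : ∀ t t' : Fin r → A, σ t t' =
      (∏ i : Fin r, ∏ j ∈ univ.filter (fun j => i < j), β (t i) (t' j)) *
        (∏ i : Fin r, ∏ j : Fin r, β (t i) (t' j)) ^ c)
    (hnondeg : ∀ x : A, (∀ y : A, β x y = 1) ↔ ∃ u : A, u ^ n = x)
    (t : Fin r → A) (ζ : μ) :
    (∀ (t' : Fin r → A) (ζ' : μ),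
        (t * t', ζ * ζ' * σ t t') = ((t' * t, ζ' * ζ * σ t' t) : (Fin r → A) × μ)) ↔
      ∃ z : A, (∃ w : A, w ^ n = z ^ (2 * (r : ℤ) * c + (r : ℤ) - 1)) ∧
        ∀ i : Fin r, ∃ u : A, t i = z * u ^ n := by

  have hswap : ∀ x y : A, β y x = (β x y)⁻¹ := fun x y =>
    eq_inv_of_mul_eq_one_left (hanti y x)
  set Bl : A → A →* μ := fun y => MonoidHom.mk' (fun x => β x y) (fun a b => h1 a b y) with hBl
  set Br : A → A →* μ := fun x => MonoidHom.mk' (fun y => β x y) (fun a b => h2 x a b) with hBr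
  have hBlx : ∀ x y : A, Bl y x = β x y := fun _ _ => rfl
  have hBrx : ∀ x y : A, Br x y = β x y := fun _ _ => rfl
  set P : A := ∏ i, t i with hP
  -- Step 1: centrality reduces to the cocycle symmetry condition
  have step1 : (∀ (t' : Fin r → A) (ζ' : μ),
        (t * t', ζ * ζ' * σ t t') = ((t' * t, ζ' * ζ * σ t' t) : (Fin r → A) × μ)) ↔
      ∀ t' : Fin r → A, σ t t' = σ t' t := by
    constructor
    · intro h t'
      have h2' := (Prod.ext_iff.mp (h t' 1)).2
      have : ζ * σ t t' = ζ * σ t' t := by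
        calc ζ * σ t t' = ζ * 1 * σ t t' := by rw [mul_one]
        _ = 1 * ζ * σ t' t := h2'
        _ = ζ * σ t' t := by rw [one_mul]
      exact mul_left_cancel this
    · intro h t' ζ'
      rw [mul_comm t t', h t', mul_comm ζ ζ']
  rw [step1]
  -- Step 2: cocycle symmetry for a given t' is a bilinear identity
  have step2 : ∀ t' : Fin r → A,
      (σ t t' = σ t' t ↔ β P (∏ j, t' j) ^ (2 * c + 1) = ∏ i, β (t i) (t' i)) := by
    intro t'
    set W : μ := ∏ i, ∏ j, β (t i) (t' j) with hW
    set S₁ : μ := ∏ i : Fin r, ∏ j ∈ univ.filter (fun j => i < j), β (t i) (t' j) with hS₁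
    set L : μ := ∏ i : Fin r, ∏ j ∈ univ.filter (fun j => j < i), β (t i) (t' j) with hL
    set D : μ := ∏ i, β (t i) (t' i) with hD
    have hβPQ : β P (∏ j, t' j) = W := by
      rw [← hBlx P (∏ j, t' j), hP, map_prod]
      refine Finset.prod_congr rfl fun i _ => ?_
      rw [hBlx, ← hBrx (t i) (∏ j, t' j), map_prod]
      rfl
    have hW' : (∏ i, ∏ j, β (t' i) (t j)) = W⁻¹ := by
      have e : (∏ i, ∏ j, β (t' i) (t j)) = ∏ i, ∏ j, (β (t j) (t' i))⁻¹ :=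
        Finset.prod_congr rfl fun i _ => Finset.prod_congr rfl fun j _ => hswap _ _
      rw [e, Finset.prod_comm]
      simp [hW, Finset.prod_inv_distrib]
    have hS₂ : (∏ i : Fin r, ∏ j ∈ univ.filter (fun j => i < j), β (t' i) (t j)) = L⁻¹ := by
      have e1 : (∏ i : Fin r, ∏ j ∈ univ.filter (fun j => i < j), β (t' i) (t j))
          = ∏ i : Fin r, ∏ j ∈ univ.filter (fun j => i < j), (β (t j) (t' i))⁻¹ :=
        Finset.prod_congr rfl fun i _ => Finset.prod_congr rfl fun j _ => hswap _ _
      have e2 : (∏ i : Fin r, ∏ j ∈ univ.filter (fun j => i < j), (β (t j) (t' i))⁻¹)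
          = ∏ j : Fin r, ∏ i ∈ univ.filter (fun i => i < j), (β (t j) (t' i))⁻¹ :=
        Finset.prod_comm' (by intro x y; simp)
      rw [e1, e2, hL]
      simp [Finset.prod_inv_distrib]
    have hsplit : W = S₁ * L * D := by
      rw [hW, hS₁, hL, hD, ← Finset.prod_mul_distrib, ← Finset.prod_mul_distrib]
      refine Finset.prod_congr rfl fun i _ => ?_
      have hset : univ.filter (fun j => ¬ i < j) = insert i (univ.filter (fun j => j < i)) := by
        ext j
        simp only [Finset.mem_filter, Finset.mem_univ, true_and, Finset.mem_insert, not_lt]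
        constructor
        · intro h; rcases lt_or_eq_of_le h with h' | h'
          · exact Or.inr h'
          · exact Or.inl h'
        · rintro (rfl | h); · exact le_refl _
          · exact le_of_lt h
      rw [← Finset.prod_filter_mul_prod_filter_not univ (fun j => i < j), hset,
        Finset.prod_insert (by simp)]
      rw [mul_comm (β (t i) (t' i)), ← mul_assoc]
    have hS1eq : S₁ = W * L⁻¹ * D⁻¹ := by
      rw [hsplit]
      simp [mul_comm, mul_left_comm, mul_assoc]
    have key : σ t t' * (σ t' t)⁻¹ = W ^ (2 * c + 1) * D⁻¹ := by
      rw [hσ t t', hσ t' t, hW', hS₂, ← hW, ← hS₁, hS1eq]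
      have hWpow : W ^ (2 * c + 1) = W ^ c * W ^ c * W := by
        rw [two_mul, zpow_add, zpow_add, zpow_one]
      rw [hWpow]
      simp [mul_inv, inv_zpow, inv_inv, mul_comm, mul_left_comm, mul_assoc]
    rw [← mul_inv_eq_one (a := σ t t'), key, mul_inv_eq_one, hβPQ]
  -- Step 3: reduce to a condition on each coordinate
  have step3 : (∀ t' : Fin r → A, σ t t' = σ t' t) ↔
      ∀ k : Fin r, ∀ y : A, β (P ^ (2 * c + 1) * (t k)⁻¹) y = 1 := by
    constructor
    · intro h k y
      have hk := (step2 _).mp (h (fun j => if j = k then y else 1))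
      have e1 : (∏ j, if j = k then y else 1) = y := by simp
      have e2 : (∏ i, β (t i) (if i = k then y else 1)) = β (t k) y := by
        have e3 : ∀ i : Fin r, β (t i) (if i = k then y else 1)
            = if i = k then β (t k) y else 1 := by
          intro i
          split_ifs with hik
          · subst hik; rfl
          · exact map_one (Br (t i))
        rw [Finset.prod_congr rfl fun i _ => e3 i]
        simp
      rw [e1, e2] at hk
      rw [← hBlx, map_mul, map_zpow, map_inv, hBlx, hBlx, hk]
      simp
    · intro h t'
      rw [step2 t']
      have hk : ∀ (k : Fin r) (y : A), β (t k) y = β P y ^ (2 * c + 1) := by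
        intro k y
        have e := h k y
        rw [← hBlx, map_mul, map_zpow, map_inv, hBlx, hBlx] at e
        exact (mul_inv_eq_one.mp e).symm
      calc β P (∏ j, t' j) ^ (2 * c + 1)
          = (∏ j, β P (t' j)) ^ (2 * c + 1) := by
            rw [← hBrx P, map_prod]; rfl
        _ = ∏ j, β P (t' j) ^ (2 * c + 1) := (Finset.prod_zpow _ _ _).symm
        _ = ∏ i, β (t i) (t' i) := Finset.prod_congr rfl fun i _ => (hk i (t' i)).symm
  rw [step3]
  -- Step 4: apply nondegeneracy
  have step4 : (∀ k : Fin r, ∀ y : A, β (P ^ (2 * c + 1) * (t k)⁻¹) y = 1) ↔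
      ∀ k : Fin r, ∃ u : A, t k = P ^ (2 * c + 1) * u ^ n := by
    refine forall_congr' fun k => ?_
    rw [hnondeg]
    constructor
    · rintro ⟨u, hu⟩
      refine ⟨u⁻¹, ?_⟩
      rw [inv_pow, hu]
      simp [mul_comm, mul_left_comm, mul_assoc]
    · rintro ⟨u, hu⟩
      refine ⟨u⁻¹, ?_⟩
      rw [inv_pow, hu]
      simp [mul_comm, mul_left_comm, mul_assoc]
  rw [step4]
  constructor
  · intro h
    choose u hu using h
    refine ⟨P ^ (2 * c + 1), ?_, fun i => ⟨u i, hu i⟩⟩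
    set z : A := P ^ (2 * c + 1) with hz
    set v : A := ∏ i, u i with hv
    have hPeq : P = z ^ (r : ℤ) * v ^ n := by
      rw [hP]
      calc ∏ i, t i = ∏ i, (z * u i ^ n) := Finset.prod_congr rfl fun i _ => hu i
        _ = z ^ (r : ℤ) * v ^ n := by
            rw [Finset.prod_mul_distrib, Finset.prod_const, Finset.prod_pow]
            simp [zpow_natCast, Finset.card_univ, hv]
    have hzz : z = z ^ ((r : ℤ) * (2 * c + 1)) * (v ^ (2 * c + 1)) ^ n := by
      calc z = P ^ (2 * c + 1) := hz
        _ = (z ^ (r : ℤ) * v ^ n) ^ (2 * c + 1) := by rw [← hPeq]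
        _ = z ^ ((r : ℤ) * (2 * c + 1)) * (v ^ (2 * c + 1)) ^ n :=
            stmt5_aux z v (2 * c + 1) r n
    have hzz' : z * ((v ^ (2 * c + 1)) ^ n)⁻¹ = z ^ ((r : ℤ) * (2 * c + 1)) := by
      rw [mul_inv_eq_iff_eq_mul]
      exact hzz
    refine ⟨(v ^ (2 * c + 1))⁻¹, ?_⟩
    have hexp : 2 * (r : ℤ) * c + (r : ℤ) - 1 = (r : ℤ) * (2 * c + 1) - 1 := by ring
    rw [inv_pow, hexp, zpow_sub, zpow_one, ← hzz']
    simp [mul_div_assoc, mul_comm]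
  · rintro ⟨z, ⟨w, hw⟩, h⟩
    choose u hu using h
    intro k
    set v : A := ∏ i, u i with hv
    have hPeq : P = z ^ (r : ℤ) * v ^ n := by
      rw [hP]
      calc ∏ i, t i = ∏ i, (z * u i ^ n) := Finset.prod_congr rfl fun i _ => hu i
        _ = z ^ (r : ℤ) * v ^ n := by
            rw [Finset.prod_mul_distrib, Finset.prod_const, Finset.prod_pow]
            simp [zpow_natCast, Finset.card_univ, hv]
    refine ⟨(w * v ^ (2 * c + 1))⁻¹ * u k, ?_⟩
    have hPc : P ^ (2 * c + 1) = z * (w ^ n * (v ^ (2 * c + 1)) ^ n) := by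
      calc P ^ (2 * c + 1) = (z ^ (r : ℤ) * v ^ n) ^ (2 * c + 1) := by rw [hPeq]
        _ = z ^ ((r : ℤ) * (2 * c + 1)) * (v ^ (2 * c + 1)) ^ n :=
            stmt5_aux z v (2 * c + 1) r n
        _ = z * z ^ (2 * (r : ℤ) * c + (r : ℤ) - 1) * (v ^ (2 * c + 1)) ^ n := by
            congr 1
            rw [mul_comm z, ← zpow_add_one]
            congr 1
            ring
        _ = z * (w ^ n * (v ^ (2 * c + 1)) ^ n) := by rw [hw, mul_assoc]
    rw [hu k, hPc, mul_pow, inv_pow, mul_pow]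
    simp [mul_inv, mul_comm, mul_left_comm, mul_assoc]
end

section
/- Let r₁,…,r_k be positive integers with r₁ + ⋯ + r_k = r, set R₀ = 0 and R_j = r₁ + ⋯ + r_j, and let S = {R₁, R₂, …, R_{k-1}}. Let σ be a permutation of {1,…,r} such that: (i) σ is strictly increasing on each block B_j = {R_{j-1}+1, …, R_j}; (ii) for every i ∈ {1,…,r-1} with i ∉ S, one has σ(i+1) = σ(i) + 1; and (iii) for every i ∈ S, one has σ(i) > σ(i+1). Then σ is uniquely determined: for i ∈ B_j, σ(i) = (r_{j+1} + r_{j+2} + ⋯ + r_k) + (i - R_{j-1}). In other words, σ maps the j-th block onto the consecutive interval occupied by the j-th block counted from the end, i.e., σ is the inverse of the block-reversing permutation w^{M_λ}. -/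
open Finset

/-- Combinatorial core of the constant-term computation: a permutation `σ` of
`{0,…,r-1}` (0-based) which is strictly increasing on each block of the composition
`(r₁,…,r_k)`, satisfies `σ(i+1) = σ(i)+1` at every non-boundary index, and has a
descent at every block boundary, must be the inverse of the block-reversing
permutation `w^{M_λ}`: it maps the `j`-th block onto the interval occupied by the
`j`-th block counted from the end. -/
theorem stmt8 (k r : ℕ) (rr : ℕ → ℕ) (R : ℕ → ℕ)
    (hR : ∀ j, R j = ∑ l ∈ range j, rr l)
    (hpos : ∀ j, j < k → 0 < rr j)
    (hrk : R k = r)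
    (σ : ℕ → ℕ)
    (hbij : Set.BijOn σ {i | i < r} {i | i < r})
    (hinc : ∀ j, j < k → ∀ i₁ i₂, R j ≤ i₁ → i₁ < i₂ → i₂ < R (j + 1) → σ i₁ < σ i₂)
    (hstep : ∀ i, i + 1 < r → (∀ j, 0 < j → j < k → i + 1 ≠ R j) → σ (i + 1) = σ i + 1)
    (hdesc : ∀ j, 0 < j → j < k → σ (R j) < σ (R j - 1)) :
    ∀ j, j < k → ∀ i, R j ≤ i → i < R (j + 1) → σ i = (r - R (j + 1)) + (i - R j) := by
  have R0 : R 0 = 0 := by simp [hR]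
  have Rsucc : ∀ j, R (j + 1) = R j + rr j := by
    intro j; simp [hR, Finset.sum_range_succ]
  have Rmono : ∀ a b, a ≤ b → R a ≤ R b := by
    intro a b hab
    rw [hR, hR]
    exact Finset.sum_le_sum_of_subset (Finset.range_subset_range.2 hab)
  -- within a block, σ is a shift
  have hblock : ∀ j, j < k → ∀ i, R j ≤ i → i < R (j + 1) → σ i = σ (R j) + (i - R j) := by
    intro j hj i
    induction i with
    | zero =>
      intro h1 _
      have h0 : R j = 0 := Nat.le_zero.mp h1
      rw [h0]; simp
    | succ i ih =>
      intro h1 h2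
      rcases Nat.eq_or_lt_of_le h1 with he | hlt
      · rw [← he]; simp
      · have hRji : R j ≤ i := by omega
        have hir : i + 1 < r := by
          have := Rmono (j + 1) k (by omega)
          omega
        have hnb : ∀ l, 0 < l → l < k → i + 1 ≠ R l := by
          intro l _ hlk he
          have h3 : R j < R l := by omega
          have h4 : R l < R (j + 1) := by omega
          have h5 : j < l := by
            by_contra h
            exact absurd (Rmono l j (by omega)) (by omega)
          have h6 : l < j + 1 := by
            by_contra h
            exact absurd (Rmono (j + 1) l (by omega)) (by omega)
          omega
        have := hstep i hir hnb
        have := ih hRji (by omega)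
        omega
  -- separation between consecutive blocks
  have hsep : ∀ j, j + 1 < k → σ (R (j + 1)) + rr (j + 1) ≤ σ (R j) := by
    intro j hjk
    have e2 : R (j + 1 + 1) = R (j + 2) := rfl
    have hrrj := hpos j (by omega)
    have hrrj1 := hpos (j + 1) hjk
    have hRj1 : R j < R (j + 1) := by have := Rsucc j; omega
    have hRj2 : R (j + 1) < R (j + 2) := by have := Rsucc (j + 1); omega
    have hR2r : R (j + 2) ≤ r := by rw [← hrk]; exact Rmono _ _ (by omega)
    -- descent
    have hd : σ (R (j + 1)) < σ (R (j + 1) - 1) := hdesc (j + 1) (by omega) hjk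
    have hv : σ (R (j + 1) - 1) = σ (R j) + (R (j + 1) - 1 - R j) :=
      hblock j (by omega) (R (j + 1) - 1) (by omega) (by omega)
    have hba : σ (R (j + 1)) < σ (R j) + rr j := by
      have := Rsucc j; omega
    by_contra hcon
    push_neg at hcon
    rcases le_or_gt (σ (R (j + 1))) (σ (R j)) with hle | hlt
    · have hi : σ (R (j + 1) + (σ (R j) - σ (R (j + 1)))) =
          σ (R (j + 1)) + (R (j + 1) + (σ (R j) - σ (R (j + 1))) - R (j + 1)) :=
        hblock (j + 1) hjk _ (by omega) (by have := Rsucc (j + 1); omega)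
      have hiv : σ (R (j + 1) + (σ (R j) - σ (R (j + 1)))) = σ (R j) := by omega
      have hmem1 : (R (j + 1) + (σ (R j) - σ (R (j + 1)))) ∈ {i | i < r} := by
        have := Rsucc (j + 1); simp only [Set.mem_setOf_eq]; omega
      have hmem2 : (R j) ∈ {i | i < r} := by
        simp only [Set.mem_setOf_eq]; omega
      have := hbij.injOn hmem1 hmem2 hiv
      omega
    · have hi : σ (R j + (σ (R (j + 1)) - σ (R j))) =
          σ (R j) + (R j + (σ (R (j + 1)) - σ (R j)) - R j) :=
        hblock j (by omega) _ (by omega) (by have := Rsucc j; omega)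
      have hiv : σ (R j + (σ (R (j + 1)) - σ (R j))) = σ (R (j + 1)) := by omega
      have hmem1 : (R j + (σ (R (j + 1)) - σ (R j))) ∈ {i | i < r} := by
        have := Rsucc j; simp only [Set.mem_setOf_eq]; omega
      have hmem2 : (R (j + 1)) ∈ {i | i < r} := by
        simp only [Set.mem_setOf_eq]; omega
      have := hbij.injOn hmem1 hmem2 hiv
      omega
  -- top block fits in [0, r)
  have htop : 0 < k → σ (R 0) + rr 0 ≤ r := by
    intro hk
    have e1 : R (0 + 1) = R 1 := rfl
    have hrr0 := hpos 0 hk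
    have hR1 : R 1 = rr 0 := by have := Rsucc 0; omega
    have hR1r : R 1 ≤ r := by rw [← hrk]; exact Rmono _ _ hk
    have hv : σ (R 1 - 1) = σ (R 0) + (R 1 - 1 - R 0) :=
      hblock 0 hk (R 1 - 1) (by omega) (by omega)
    have hm : σ (R 1 - 1) < r := hbij.mapsTo (by simp only [Set.mem_setOf_eq]; omega)
    omega
  -- lower bound by downward induction
  have lb : ∀ d j, j < k → k = j + d + 1 → r - R (j + 1) ≤ σ (R j) := by
    intro d
    induction d with
    | zero =>
      intro j hj hk
      have : R (j + 1) = r := by rw [← hrk]; congr 1; omega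
      omega
    | succ d ih =>
      intro j hj hk
      have e2 : R (j + 1 + 1) = R (j + 2) := rfl
      have h1 := ih (j + 1) (by omega) (by omega)
      have h2 := hsep j (by omega)
      have h3 : R (j + 2) ≤ r := by rw [← hrk]; exact Rmono _ _ (by omega)
      have h4 := Rsucc (j + 1)
      omega
  -- upper bound by upward induction
  have ub : ∀ j, j < k → σ (R j) ≤ r - R (j + 1) := by
    intro j
    induction j with
    | zero =>
      intro hk
      have e1 : R (0 + 1) = R 1 := rfl
      have := htop hk
      have hR1 : R 1 = rr 0 := by have := Rsucc 0; omega
      have hR1r : R 1 ≤ r := by rw [← hrk]; exact Rmono _ _ hk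
      omega
    | succ j ih =>
      intro hj
      have e2 : R (j + 1 + 1) = R (j + 2) := rfl
      have h1 := ih (by omega)
      have h2 := hsep j hj
      have h3 : R (j + 2) ≤ r := by rw [← hrk]; exact Rmono _ _ (by omega)
      have h4 := Rsucc (j + 1)
      have h5 : R (j + 1) ≤ r := by omega
      omega
  intro j hj i h1 h2
  have hb := hblock j hj i h1 h2
  have hl := lb (k - j - 1) j hj (by omega)
  have hu := ub j hj
  omega
end
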